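/- For any tree T and any odd positive integer k, the k-th bipartite power T^[k] is a chordal bipartite graph (a bipartite graph with no induced cycle of length greater than 4). -/

import Mathlib

open SimpleGraph Set

/-- `f` given by endpoint functions `a`, `b` is an interval representation of `I`. -/
def IsIntervalRep {V : Type*} (I : SimpleGraph V) (a b : V → ℝ) : Prop :=
  (∀ v, a v ≤ b v) ∧
    ∀ u v, I.Adj u v ↔ u ≠ v ∧ (Set.Icc (a u) (b u) ∩ Set.Icc (a v) (b v)).Nonempty

/-- `I` is an interval graph. -/
def IsIntervalGraph {V : Type*} (I : SimpleGraph V) : Prop :=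
  ∃ a b : V → ℝ, IsIntervalRep I a b

/-- `G` is the intersection graph of axis-parallel `k`-dimensional boxes. -/
def IsBoxRep {V : Type*} (G : SimpleGraph V) (k : ℕ) : Prop :=
  ∃ lo hi : V → Fin k → ℝ, (∀ v i, lo v i ≤ hi v i) ∧
    ∀ u v, G.Adj u v ↔ u ≠ v ∧
      ∀ i, (Set.Icc (lo u i) (hi u i) ∩ Set.Icc (lo v i) (hi v i)).Nonempty

/-- The boxicity of a graph: the least `k` such that `G` is an intersection graph of
axis-parallel `k`-dimensional boxes. -/
noncomputable def boxicity {V : Type*} (G : SimpleGraph V) : ℕ :=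
  sInf {k | IsBoxRep G k}

/-- The `k`-th bipartite power of `G`: join vertices at odd distance at most `k`. -/
def bipartitePower {V : Type*} (G : SimpleGraph V) (k : ℕ) : SimpleGraph V :=
  SimpleGraph.fromRel (fun u v => Odd (G.dist u v) ∧ G.dist u v ≤ k)

/-- Add to `G` all edges between distinct vertices of `B`. -/
def addCliqueOn {V : Type*} (G : SimpleGraph V) (B : Set V) : SimpleGraph V :=
  SimpleGraph.fromRel (fun u v => G.Adj u v ∨ (u ∈ B ∧ v ∈ B))

/-- `{A, B}` is a bipartition of `G`. -/
def IsBipartitionOf {V : Type*} (G : SimpleGraph V) (A B : Set V) : Prop :=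
  Disjoint A B ∧ A ∪ B = Set.univ ∧ ∀ u v, G.Adj u v → (u ∈ A ↔ v ∈ B)

/-- `G` has no induced cycle of length greater than `m`. -/
def HasNoInducedCycleGT {V : Type*} (G : SimpleGraph V) (m : ℕ) : Prop :=
  ∀ n : ℕ, m < n → IsEmpty (SimpleGraph.cycleGraph n ↪g G)

/-- Chordal bipartite graphs: bipartite with no induced cycle of length > 4. -/
def ChordalBipartite {V : Type*} (G : SimpleGraph V) : Prop :=
  (∃ A B : Set V, IsBipartitionOf G A B) ∧ HasNoInducedCycleGT G 4

/-- The closed neighbourhood `N[v]`. -/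
def closedNbhd {V : Type*} (G : SimpleGraph V) (v : V) : Set V :=
  insert v (G.neighborSet v)

/-- Two vertices are compatible if one closed neighbourhood contains the other. -/
def Compatible {V : Type*} (G : SimpleGraph V) (u v : V) : Prop :=
  closedNbhd G u ⊆ closedNbhd G v ∨ closedNbhd G v ⊆ closedNbhd G u

/-- A vertex is simple if all pairs in its closed neighbourhood are compatible. -/
def IsSimpleVertex {V : Type*} (G : SimpleGraph V) (v : V) : Prop :=
  ∀ x ∈ closedNbhd G v, ∀ y ∈ closedNbhd G v, Compatible G x y

namespace TreePowerAux

variable {V : Type*} {T : SimpleGraph V}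

lemma tri' (hT : T.IsTree) (x y z : V) : T.dist x z ≤ T.dist x y + T.dist y z :=
  hT.isConnected.dist_triangle

lemma dist_adj (hT : T.IsTree) {x y : V} (h : T.Adj x y) : T.dist x y = 1 :=
  dist_eq_one_iff_adj.mpr h

lemma dist_zero (hT : T.IsTree) {x y : V} (h : T.dist x y = 0) : x = y :=
  ((hT.isConnected.preconnected x y).dist_eq_zero_iff).mp h

lemma path_len (hT : T.IsTree) {x y : V} {p : T.Walk x y} (hp : p.IsPath) :
    p.length = T.dist x y := by
  obtain ⟨q, hq, hql⟩ := hT.isConnected.exists_path_of_dist x y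
  have := hT.IsAcyclic.path_unique ⟨p, hp⟩ ⟨q, hq⟩
  rw [show p = q from congrArg Subtype.val this, hql]

lemma dist_split (hT : T.IsTree) {x y u : V} {p : T.Walk x y} (hp : p.IsPath)
    (hu : u ∈ p.support) : T.dist x u + T.dist u y = T.dist x y := by
  classical
  rw [← path_len hT (hp.takeUntil hu), ← path_len hT (hp.dropUntil hu), ← path_len hT hp]
  have := congrArg Walk.length (p.take_spec hu)
  rwa [Walk.length_append] at this

lemma adj_dist_ne (hT : T.IsTree) {x u y : V} (hxu : T.Adj x u) :
    T.dist x y ≠ T.dist u y := by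
  intro h
  obtain ⟨p, hp, hpl⟩ := hT.isConnected.exists_path_of_dist x y
  by_cases hu : u ∈ p.support
  · have hsplit := dist_split hT hp hu
    have h1 : T.dist x u ≠ 0 := fun h0 => hxu.ne (dist_zero hT h0)
    have h2 : T.dist u y = T.dist x y := h.symm
    omega
  · have hp' : (Walk.cons hxu.symm p).IsPath := hp.cons (by simpa using hu)
    have := path_len hT hp'
    simp only [Walk.length_cons, hpl] at this
    rw [h] at this
    omega

lemma walk_parity (hT : T.IsTree) {x y : V} (w : T.Walk x y) :
    (w.length : ZMod 2) = (T.dist x y : ZMod 2) := by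
  induction w with
  | nil => simp [SimpleGraph.dist_self]
  | @cons a b c h w ih =>
    have hne := adj_dist_ne hT (y := c) h
    have t1 := tri' hT a b c
    have t2 := tri' hT b a c
    rw [dist_adj hT h] at t1
    rw [dist_adj hT h.symm] at t2
    have : T.dist a c = T.dist b c + 1 ∨ T.dist b c = T.dist a c + 1 := by omega
    rw [Walk.length_cons]
    push_cast
    rw [ih]
    rcases this with h' | h'
    · rw [h']; push_cast; ring
    · rw [h']; push_cast
      have h2 : (2 : ZMod 2) = 0 := rfl
      linear_combination h2



lemma dist_parity (hT : T.IsTree) (x y z : V) :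
    (T.dist x z : ZMod 2) = (T.dist x y : ZMod 2) + (T.dist y z : ZMod 2) := by
  have h : ∀ {a b : V} (w : T.Walk a b), (w.length : ZMod 2) = (T.dist a b : ZMod 2) :=
    fun w => walk_parity hT w
  obtain ⟨p, _, hpl⟩ := hT.isConnected.exists_path_of_dist x y
  obtain ⟨q, _, hql⟩ := hT.isConnected.exists_path_of_dist y z
  have := h (p.append q)
  rw [Walk.length_append] at this
  rw [← this]
  push_cast
  rw [hpl, hql]

-- getVert distances along a geodesic
lemma dist_getVert_le (hT : T.IsTree) {x y : V} (w : T.Walk x y) (i : ℕ) :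
    T.dist x (w.getVert i) ≤ i := by
  induction w generalizing i with
  | nil => rw [Walk.getVert_of_length_le _ (by simp)]; simp [SimpleGraph.dist_self]
  | @cons a b c h w ih =>
    cases i with
    | zero => simp [Walk.getVert_zero, SimpleGraph.dist_self]
    | succ i =>
      have : (Walk.cons h w).getVert (i+1) = w.getVert i := rfl
      rw [this]
      calc T.dist a (w.getVert i) ≤ T.dist a b + T.dist b (w.getVert i) := tri' hT _ _ _
        _ ≤ 1 + i := by
            have := ih i
            have hab : T.dist a b = 1 := dist_eq_one_iff_adj.mpr h
            omega
        _ = i + 1 := by omega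

lemma dist_getVert_le' (hT : T.IsTree) {x y : V} (w : T.Walk x y) (i : ℕ) :
    T.dist (w.getVert i) y ≤ w.length - i := by
  induction w generalizing i with
  | nil => rw [Walk.getVert_of_length_le _ (by simp)]; simp [SimpleGraph.dist_self]
  | @cons a b c h w ih =>
    cases i with
    | zero =>
      simp only [Walk.getVert_zero, Walk.length_cons, Nat.sub_zero]
      calc T.dist a c ≤ T.dist a b + T.dist b c := tri' hT _ _ _
        _ ≤ 1 + w.length := by
            have h1 : T.dist a b = 1 := dist_eq_one_iff_adj.mpr h
            have h2 := SimpleGraph.dist_le w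
            omega
        _ = w.length + 1 := by omega
    | succ i =>
      have : (Walk.cons h w).getVert (i+1) = w.getVert i := rfl
      rw [this, Walk.length_cons]
      have := ih i
      omega

lemma getVert_dists (hT : T.IsTree) {x y : V} {w : T.Walk x y} (hw : w.length = T.dist x y)
    {i : ℕ} (hi : i ≤ w.length) :
    T.dist x (w.getVert i) = i ∧ T.dist (w.getVert i) y = w.length - i := by
  have h1 := dist_getVert_le hT w i
  have h2 := dist_getVert_le' hT w i
  have h3 := tri' hT x (w.getVert i) y
  omega

-- F4': an adjacent pair straddling the edge (p,q) must be (p,q).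
lemma adj_cross_eq (hT : T.IsTree) {p q x z : V} (hpq : T.Adj p q) (hxz : T.Adj x z)
    (hx : T.dist x p + 1 = T.dist x q) (hz : T.dist z q + 1 = T.dist z p) :
    x = p ∧ z = q := by
  have hone : T.dist x z = 1 := dist_eq_one_iff_adj.mpr hxz
  have hone' : T.dist z x = 1 := by rw [SimpleGraph.dist_comm]; exact hone
  -- dist x p = dist z q
  have e1 : T.dist x q ≤ T.dist x z + T.dist z q := tri' hT _ _ _
  have e2 : T.dist z p ≤ T.dist z x + T.dist x p := tri' hT _ _ _
  have ht : T.dist x p = T.dist z q := by omega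
  rcases Nat.eq_zero_or_pos (T.dist x p) with h0 | hpos
  · constructor
    · exact ((hT.isConnected.preconnected x p).dist_eq_zero_iff).mp h0
    · exact ((hT.isConnected.preconnected z q).dist_eq_zero_iff).mp (by omega)
  · exfalso
    set t := T.dist x p with htt
    obtain ⟨p₁, hp₁, hp₁l⟩ := hT.isConnected.exists_path_of_dist x p
    obtain ⟨p₂, hp₂, hp₂l⟩ := hT.isConnected.exists_path_of_dist z q
    have hxq : T.dist x q = t + 1 := by omega
    -- two walks x → q of length dist x q
    have w₁len : (p₁.concat hpq).length = T.dist x q := by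
      rw [Walk.length_concat, hp₁l, hxq]
    have w₂len : (Walk.cons hxz p₂).length = T.dist x q := by
      rw [Walk.length_cons, hp₂l, hxq]; omega
    have w₁path : (p₁.concat hpq).IsPath := Walk.isPath_of_length_eq_dist _ w₁len
    have w₂path : (Walk.cons hxz p₂).IsPath := Walk.isPath_of_length_eq_dist _ w₂len
    have hEq : (p₁.concat hpq) = (Walk.cons hxz p₂) := by
      have := hT.IsAcyclic.path_unique ⟨_, w₁path⟩ ⟨_, w₂path⟩
      exact congrArg Subtype.val this
    -- compare getVert 1
    have hz1 : (Walk.cons hxz p₂).getVert 1 = z := by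
      have : (Walk.cons hxz p₂).getVert 1 = p₂.getVert 0 := rfl
      rw [this, Walk.getVert_zero]
    have hgv : (p₁.concat hpq).getVert 1 = p₁.getVert 1 := by
      rw [Walk.concat_eq_append, Walk.getVert_append]
      by_cases hlt : 1 < p₁.length
      · rw [if_pos hlt]
      · rw [if_neg hlt]
        have hl1 : p₁.length = 1 := by omega
        rw [hl1]
        have e1 : (Walk.cons hpq (Walk.nil)).getVert (1-1) = p := by
          simp [Walk.getVert_zero]
        have e2 : p₁.getVert 1 = p := by
          conv_lhs => rw [← hl1]
          exact Walk.getVert_length p₁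
        rw [e1, e2]
    have hzv : z = p₁.getVert 1 := by rw [← hz1, ← hEq, hgv]
    have hd := getVert_dists hT hp₁l (i := 1) (by omega)
    rw [← hzv] at hd
    have : T.dist z p = t - 1 := by
      have := hd.2
      omega
    omega




lemma cross_walk_bound (hT : T.IsTree) {p q : V} (hpq : T.Adj p q) :
    ∀ {x y : V} (w : T.Walk x y), T.dist x p + 1 = T.dist x q →
      T.dist y q + 1 = T.dist y p →
      T.dist x p + 1 + T.dist q y ≤ w.length := by
  intro x y w
  induction w with
  | nil => intro h1 h2; omega
  | @cons a b c h w ih =>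
    intro h1 h2
    have hside : T.dist b p + 1 = T.dist b q ∨ T.dist b q + 1 = T.dist b p := by
      have hne : T.dist b p ≠ T.dist b q := by
        intro he
        have := adj_dist_ne (T := T) hT hpq (y := b)
        rw [SimpleGraph.dist_comm (u := p) (v := b), SimpleGraph.dist_comm (u := q) (v := b)] at this
        exact this he
      have t1 := tri' hT b p q
      have t2 := tri' hT b q p
      have hd : T.dist p q = 1 := dist_eq_one_iff_adj.mpr hpq
      have hd' : T.dist q p = 1 := by rw [SimpleGraph.dist_comm]; exact hd
      omega
    rcases hside with hb | hb
    · -- b still on p-side: induct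
      have := ih hb h2
      have hab : T.dist a b = 1 := dist_eq_one_iff_adj.mpr h
      have t1 := tri' hT a b p
      rw [Walk.length_cons]
      omega
    · -- crossing edge: must be (p,q)
      obtain ⟨hap, hbq⟩ := adj_cross_eq hT hpq h h1 hb
      have h0 : T.dist a p = 0 := by rw [hap]; simp [SimpleGraph.dist_self]
      have hqc : T.dist q c ≤ w.length := by rw [← hbq]; exact SimpleGraph.dist_le w
      rw [Walk.length_cons]
      omega

lemma cross_dist (hT : T.IsTree) {p q x y : V} (hpq : T.Adj p q)
    (hx : T.dist x p + 1 = T.dist x q) (hy : T.dist y q + 1 = T.dist y p) :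
    T.dist x y = T.dist x p + 1 + T.dist q y := by
  obtain ⟨w, hwl⟩ := (hT.isConnected.preconnected x y).exists_walk_length_eq_dist
  have hge := cross_walk_bound hT hpq w hx hy
  rw [hwl] at hge
  have hle : T.dist x y ≤ T.dist x p + 1 + T.dist q y := by
    have t1 := tri' hT x p y
    have t2 := tri' hT p q y
    have hd : T.dist p q = 1 := dist_eq_one_iff_adj.mpr hpq
    omega
  omega



lemma master (hT : T.IsTree) {n k E D s : ℕ} (hn : 6 ≤ n) [NeZero n]
    (v : ZMod n → V)
    (hstep : ∀ a : ZMod n, T.dist (v a) (v (a + 1)) ≤ k)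
    (hLB1 : ∀ (m : ZMod n) (t : ℕ), 2 ≤ t → t ≤ n - 2 →
      E ≤ T.dist (v m) (v (m + (t : ZMod n))))
    (hLB2 : ∀ (m : ZMod n) (t : ℕ), 2 ≤ t → t ≤ n - 2 → Odd (t + s) →
      k + 1 ≤ T.dist (v m) (v (m + (t : ZMod n))))
    (i : ZMod n) (hs : 1 ≤ s) (hs4 : s + 4 ≤ n) (hne : Even n) (hpar : Even s ∨ E = k + 1)
    (hD : T.dist (v i) (v (i + (s : ZMod n))) = D)
    (hD1 : 1 ≤ D) (hDk : D ≤ k) (hED : D ≤ E) : False := by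
  set j : ZMod n := i + (s : ZMod n) with hj
  -- geodesic from v i to v j
  obtain ⟨w, hwl⟩ := (hT.isConnected.preconnected (v i) (v j)).exists_walk_length_eq_dist
  set X : ℕ := (D - 1) / 2 with hX
  have hX1 : 2 * X ≤ D - 1 := by omega
  have hX2 : D - 2 ≤ 2 * X := by omega
  have hXD : X + 1 ≤ D := by omega
  set p : V := w.getVert X with hp
  set q : V := w.getVert (X + 1) with hq
  have hwD : w.length = D := by rw [hwl, hD]
  have hadj : T.Adj p q := w.adj_getVert_succ (by omega)
  have hip : T.dist (v i) p = X := (getVert_dists hT hwl (by omega)).1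
  have hpj : T.dist p (v j) = D - X := by
    have := (getVert_dists hT hwl (i := X) (by omega)).2; rwa [hwD] at this
  have hiq : T.dist (v i) q = X + 1 := (getVert_dists hT hwl (by omega)).1
  have hqj : T.dist q (v j) = D - (X + 1) := by
    have := (getVert_dists hT hwl (i := X+1) (by omega)).2; rwa [hwD] at this
  -- sides
  set f : ZMod n → Prop := fun a => T.dist (v a) p + 1 = T.dist (v a) q with hf
  set g : ZMod n → Prop := fun a => T.dist (v a) q + 1 = T.dist (v a) p with hg
  have dich : ∀ a : ZMod n, (f a ∧ ¬ g a) ∨ (g a ∧ ¬ f a) := by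
    intro a
    have hne := adj_dist_ne (T := T) hT hadj (y := v a)
    rw [SimpleGraph.dist_comm (u := p) (v := v a),
        SimpleGraph.dist_comm (u := q) (v := v a)] at hne
    have t1 := tri' hT (v a) p q
    have t2 := tri' hT (v a) q p
    have hd : T.dist p q = 1 := dist_eq_one_iff_adj.mpr hadj
    have hd' : T.dist q p = 1 := by rw [SimpleGraph.dist_comm]; exact hd
    simp only [hf, hg]
    omega
  have hfi : f i := by simp only [hf]; omega
  have hjp : T.dist (v j) p = D - X := by
    rw [SimpleGraph.dist_comm]; exact hpj
  have hjq : T.dist (v j) q = D - (X + 1) := by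
    rw [SimpleGraph.dist_comm]; exact hqj
  have hgj : g j := by simp only [hg]; omega
  -- index helpers
  have idx1 : ∀ t : ℕ, (i + (t : ZMod n)) + 1 = i + ((t + 1 : ℕ) : ZMod n) := by
    intro t; push_cast; ring
  -- no crossing outside window
  have hpi : T.dist p (v i) = X := by rw [SimpleGraph.dist_comm]; exact hip
  have hqi : T.dist q (v i) = X + 1 := by rw [SimpleGraph.dist_comm]; exact hiq
  have bnd_ip : ∀ z : V, T.dist z (v i) ≤ T.dist z p + X := by
    intro z; have := tri' hT z p (v i); omega
  have bnd_iq : ∀ z : V, T.dist z (v i) ≤ T.dist z q + (X + 1) := by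
    intro z; have := tri' hT z q (v i); omega
  have bnd_jp : ∀ z : V, T.dist z (v j) ≤ T.dist z p + (D - X) := by
    intro z; have := tri' hT z p (v j); omega
  have bnd_jq : ∀ z : V, T.dist z (v j) ≤ T.dist z q + (D - (X + 1)) := by
    intro z; have := tri' hT z q (v j); omega
  have oddn1 : Odd (n - 1) := by
    rw [Nat.odd_iff]; rw [Nat.even_iff] at hne; omega
  have excl : ∀ t : ℕ, s ≤ t → t ≤ n - 1 →
      (f (i + (t : ZMod n)) ↔ f (i + ((t + 1 : ℕ) : ZMod n))) := by
    intro t hts htn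
    set a : ZMod n := i + (t : ZMod n) with ha
    set b : ZMod n := i + ((t + 1 : ℕ) : ZMod n) with hb
    have hab : a + 1 = b := by rw [ha, hb]; push_cast; ring
    have hstepab : T.dist (v a) (v b) ≤ k := by rw [← hab]; exact hstep a
    rcases dich a with ⟨hfa, hga⟩ | ⟨hga, hfa⟩
    · rcases dich b with ⟨hfb, hgb⟩ | ⟨hgb, hfb⟩
      · exact iff_of_true hfa hfb
      · -- dir1 crossing : v a on p-side, v b on q-side
        exfalso
        simp only [hf] at hfa
        simp only [hg] at hgb
        have hcross := cross_dist hT hadj hfa hgb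
        set al : ℕ := T.dist (v a) p with hal
        set be : ℕ := T.dist q (v b) with hbe
        rcases eq_or_ne t s with h | hts1
        · -- a = j : f j and g j contradict
          have haj : a = j := by rw [ha, hj, h]
          rw [haj] at hfa
          have e1 : al = T.dist (v j) p := by rw [hal, haj]
          simp only [hg] at hgj
          omega
        rcases eq_or_ne t (s+1) with h | hts2
        · -- u = v_{s+1} (anchor i, odd), w = v_{s+2} (anchor j, E)
          have hu : k + 1 ≤ T.dist (v i) (v a) := by
            rw [ha, h]; exact hLB2 i (s+1) (by omega) (by omega) ⟨s, by ring⟩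
          rw [SimpleGraph.dist_comm (u := v i)] at hu
          have hu' : T.dist (v a) (v i) ≤ al + X := bnd_ip (v a)
          have hwLB : E ≤ T.dist (v j) (v (j + ((2:ℕ) : ZMod n))) :=
            hLB1 j 2 (by omega) (by omega)
          have hidx : j + ((2:ℕ) : ZMod n) = b := by rw [hj, hb, h]; push_cast; ring
          rw [hidx, SimpleGraph.dist_comm (u := v j)] at hwLB
          have hw' : T.dist (v b) (v j) ≤ be + (D - (X+1)) := by
            have h1 := bnd_jq (v b)
            have h2 : T.dist (v b) q = be := by rw [hbe, SimpleGraph.dist_comm]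
            omega
          omega
        rcases eq_or_ne t (n-1) with h | htn1
        · -- b = i : g b contradicts f i
          have hbi : b = i := by
            rw [hb, h, show (n-1)+1 = n by omega, ZMod.natCast_self, add_zero]
          rw [hbi] at hgb
          simp only [hf] at hfi
          omega
        rcases eq_or_ne t (n-2) with h | htn2
        · -- u = v_{n-2} (anchor i, E), w = v_{n-1} (anchor j, odd)
          have hu : E ≤ T.dist (v i) (v a) := by
            rw [ha, h]; exact hLB1 i (n-2) (by omega) (by omega)
          rw [SimpleGraph.dist_comm (u := v i)] at hu
          have hu' : T.dist (v a) (v i) ≤ al + X := bnd_ip (v a)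
          have hwLB : k + 1 ≤ T.dist (v j) (v (j + ((n-1-s : ℕ) : ZMod n))) := by
            refine hLB2 j (n-1-s) (by omega) (by omega) ?_
            rw [show (n-1-s) + s = n-1 by omega]; exact oddn1
          have hidx : j + ((n-1-s : ℕ) : ZMod n) = b := by
            rw [hj, hb, h, show (n-2)+1 = n-1 by omega]
            push_cast [Nat.cast_sub (by omega : s ≤ n-1), Nat.cast_sub (by omega : 1 ≤ n)]
            rw [ZMod.natCast_self]; ring
          rw [hidx, SimpleGraph.dist_comm (u := v j)] at hwLB
          have hw' : T.dist (v b) (v j) ≤ be + (D - (X+1)) := by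
            have h1 := bnd_jq (v b)
            have h2 : T.dist (v b) q = be := by rw [hbe, SimpleGraph.dist_comm]
            omega
          omega
        · -- generic : s+2 ≤ t ≤ n-3
          have hgen : s + 2 ≤ t ∧ t ≤ n - 3 := by omega
          have hu1 : E ≤ T.dist (v i) (v a) := by
            rw [ha]; exact hLB1 i t (by omega) (by omega)
          have hw1 : E ≤ T.dist (v j) (v (j + ((t+1-s : ℕ) : ZMod n))) :=
            hLB1 j (t+1-s) (by omega) (by omega)
          have hstrong : (k+1 ≤ T.dist (v i) (v a)) ∨
              (k+1 ≤ T.dist (v j) (v (j + ((t+1-s : ℕ) : ZMod n)))) := by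
            rcases hpar with hse | hek
            · rcases Nat.even_or_odd t with hte | hto
              · right
                refine hLB2 j (t+1-s) (by omega) (by omega) ?_
                rw [show (t+1-s) + s = t+1 by omega, Nat.odd_iff]
                rw [Nat.even_iff] at hte; omega
              · left
                rw [ha]
                refine hLB2 i t (by omega) (by omega) ?_
                rw [Nat.odd_iff]; rw [Nat.odd_iff] at hto; rw [Nat.even_iff] at hse
                omega
            · left; rw [← hek]; exact hu1
          have hidx : j + ((t+1-s : ℕ) : ZMod n) = b := by
            rw [hj, hb]
            push_cast [Nat.cast_sub (by omega : s ≤ t+1)]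
            ring
          rw [hidx] at hw1 hstrong
          rw [SimpleGraph.dist_comm (u := v i) (v := v a),
              SimpleGraph.dist_comm (u := v j) (v := v b)] at hstrong
          rw [SimpleGraph.dist_comm (u := v i)] at hu1
          rw [SimpleGraph.dist_comm (u := v j)] at hw1
          have hu' : T.dist (v a) (v i) ≤ al + X := bnd_ip (v a)
          have hw' : T.dist (v b) (v j) ≤ be + (D - (X+1)) := by
            have h1 := bnd_jq (v b)
            have h2 : T.dist (v b) q = be := by rw [hbe, SimpleGraph.dist_comm]
            omega
          rcases hstrong with hst | hst <;> omega
    · rcases dich b with ⟨hfb, hgb⟩ | ⟨hgb, hfb⟩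
      · -- dir2 crossing : v b on p-side, v a on q-side
        exfalso
        simp only [hf] at hfb
        simp only [hg] at hga
        have hcross := cross_dist hT hadj hfb hga
        have hstepba : T.dist (v b) (v a) ≤ k := by
          rw [SimpleGraph.dist_comm]; exact hstepab
        set al : ℕ := T.dist (v b) p with hal
        set be : ℕ := T.dist q (v a) with hbe
        have hbe' : T.dist (v a) q = be := by rw [hbe, SimpleGraph.dist_comm]
        rcases eq_or_ne t s with h | hts1
        · -- w = v_j exact ; u = v_{s+1} anchor i (odd)
          have haj : a = j := by rw [ha, hj, h]
          have hbeval : be = D - (X+1) := by rw [hbe, haj]; exact hqj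
          have hu : k + 1 ≤ T.dist (v i) (v b) := by
            rw [hb, h]; exact hLB2 i (s+1+1-1) (by omega) (by omega) (by
              refine ⟨s, by omega⟩)
          rw [SimpleGraph.dist_comm (u := v i)] at hu
          have hu' : T.dist (v b) (v i) ≤ al + X := bnd_ip (v b)
          omega
        rcases eq_or_ne t (s+1) with h | hts2
        · -- u = v_{s+2} anchor i (E) ; w = v_{s+1} anchor i (odd)
          have hu : E ≤ T.dist (v i) (v b) := by
            rw [hb, h]; exact hLB1 i (s+2) (by omega) (by omega)
          rw [SimpleGraph.dist_comm (u := v i)] at hu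
          have hu' : T.dist (v b) (v i) ≤ al + X := bnd_ip (v b)
          have hw : k + 1 ≤ T.dist (v i) (v a) := by
            rw [ha, h]; exact hLB2 i (s+1) (by omega) (by omega) ⟨s, by ring⟩
          rw [SimpleGraph.dist_comm (u := v i)] at hw
          have hw' : T.dist (v a) (v i) ≤ be + (X+1) := by
            have h1 := bnd_iq (v a)
            omega
          omega
        rcases eq_or_ne t (n-1) with h | htn1
        · -- u = v_i exact ; w = v_{n-1} anchor j (odd)
          have hbi : b = i := by
            rw [hb, h, show (n-1)+1 = n by omega, ZMod.natCast_self, add_zero]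
          have haleval : al = X := by rw [hal, hbi]; exact hip
          have hw : k + 1 ≤ T.dist (v j) (v (j + ((n-1-s : ℕ) : ZMod n))) := by
            refine hLB2 j (n-1-s) (by omega) (by omega) ?_
            rw [show (n-1-s) + s = n-1 by omega]; exact oddn1
          have hidx : j + ((n-1-s : ℕ) : ZMod n) = a := by
            rw [hj, ha, h]
            push_cast [Nat.cast_sub (by omega : s ≤ n-1), Nat.cast_sub (by omega : 1 ≤ n)]
            rw [ZMod.natCast_self]; ring
          rw [hidx, SimpleGraph.dist_comm (u := v j)] at hw
          have hw' : T.dist (v a) (v j) ≤ be + (D - (X+1)) := by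
            have h1 := bnd_jq (v a)
            omega
          omega
        rcases eq_or_ne t (n-2) with h | htn2
        · -- u = v_{n-1} anchor j (odd) ; w = v_{n-2} anchor i (E)
          have hu : k + 1 ≤ T.dist (v j) (v (j + ((n-1-s : ℕ) : ZMod n))) := by
            refine hLB2 j (n-1-s) (by omega) (by omega) ?_
            rw [show (n-1-s) + s = n-1 by omega]; exact oddn1
          have hidx : j + ((n-1-s : ℕ) : ZMod n) = b := by
            rw [hj, hb, h, show (n-2)+1 = n-1 by omega]
            push_cast [Nat.cast_sub (by omega : s ≤ n-1), Nat.cast_sub (by omega : 1 ≤ n)]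
            rw [ZMod.natCast_self]; ring
          rw [hidx, SimpleGraph.dist_comm (u := v j)] at hu
          have hu' : T.dist (v b) (v j) ≤ al + (D - X) := bnd_jp (v b)
          have hw : E ≤ T.dist (v i) (v a) := by
            rw [ha, h]; exact hLB1 i (n-2) (by omega) (by omega)
          rw [SimpleGraph.dist_comm (u := v i)] at hw
          have hw' : T.dist (v a) (v i) ≤ be + (X+1) := by
            have h1 := bnd_iq (v a)
            omega
          omega
        · -- generic dir2 : u slot anchor i at δ = t+1 ; w slot anchor j at δ' = t-s
          have hgen : s + 2 ≤ t ∧ t ≤ n - 3 := by omega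
          have hu1 : E ≤ T.dist (v i) (v b) := by
            rw [hb]; exact hLB1 i (t+1) (by omega) (by omega)
          have hw1 : E ≤ T.dist (v j) (v (j + ((t-s : ℕ) : ZMod n))) :=
            hLB1 j (t-s) (by omega) (by omega)
          have hstrong : (k+1 ≤ T.dist (v i) (v b)) ∨
              (k+1 ≤ T.dist (v j) (v (j + ((t-s : ℕ) : ZMod n)))) := by
            rcases hpar with hse | hek
            · rcases Nat.even_or_odd t with hte | hto
              · left
                rw [hb]
                refine hLB2 i (t+1) (by omega) (by omega) ?_
                rw [Nat.odd_iff]; rw [Nat.even_iff] at hte hse; omega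
              · right
                refine hLB2 j (t-s) (by omega) (by omega) ?_
                rw [show (t-s) + s = t by omega]; exact hto
            · left; rw [← hek]; exact hu1
          have hidx : j + ((t-s : ℕ) : ZMod n) = a := by
            rw [hj, ha]
            push_cast [Nat.cast_sub (by omega : s ≤ t)]
            ring
          rw [hidx] at hw1 hstrong
          rw [SimpleGraph.dist_comm (u := v i) (v := v b),
              SimpleGraph.dist_comm (u := v j) (v := v a)] at hstrong
          rw [SimpleGraph.dist_comm (u := v i)] at hu1
          rw [SimpleGraph.dist_comm (u := v j)] at hw1
          have hu' : T.dist (v b) (v i) ≤ al + X := bnd_ip (v b)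
          have hw' : T.dist (v a) (v j) ≤ be + (D - (X+1)) := by
            have h1 := bnd_jq (v a)
            omega
          rcases hstrong with hst | hst <;> omega
      · exact iff_of_false hfa hfb
  -- chain
  have chain : ∀ r : ℕ, r ≤ n - s → (f (i + ((s + r : ℕ) : ZMod n)) ↔ f j) := by
    intro r
    induction r with
    | zero => intro _; simp [hj]
    | succ r ih =>
      intro hr
      have h1 := ih (by omega)
      have h2 := excl (s + r) (by omega) (by omega)
      rw [show s + (r+1) = (s + r) + 1 by ring]
      rw [← h2]
      exact h1
  have hfin : f (i + ((s + (n - s) : ℕ) : ZMod n)) ↔ f j := chain (n - s) le_rfl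
  have : ((s + (n - s) : ℕ) : ZMod n) = 0 := by
    rw [show s + (n - s) = n by omega]
    exact ZMod.natCast_self n
  rw [this, add_zero] at hfin
  have hgj' := hgj
  rcases dich j with ⟨hfj, _⟩ | ⟨_, hnfj⟩
  · simp only [hf, hg] at hfj hgj'; omega
  · exact hnfj (hfin.mp hfi)

lemma cast2_zero_iff (m : ℕ) : (m : ZMod 2) = 0 ↔ Even m := by
  constructor
  · intro h
    rcases Nat.even_or_odd m with he | ho
    · exact he
    · exfalso
      obtain ⟨r, rfl⟩ := ho
      push_cast at h
      rw [show ((2:ZMod 2)) = 0 from rfl] at h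
      simp at h
  · rintro ⟨r, rfl⟩
    push_cast
    ring_nf
    rw [show ((2:ZMod 2)) = 0 from rfl]
    ring
lemma cast2_one_iff (m : ℕ) : (m : ZMod 2) = 1 ↔ Odd m := by
  constructor
  · intro h
    rcases Nat.even_or_odd m with he | ho
    · exfalso
      rw [(cast2_zero_iff m).mpr he] at h
      simp at h
    · exact ho
  · rintro ⟨r, rfl⟩
    push_cast
    rw [show ((2:ZMod 2)) = 0 from rfl]
    ring

theorem noCycle (hT : T.IsTree) (k : ℕ) (hk : Odd k) (n : ℕ) (hn : 4 < n) :
    IsEmpty (SimpleGraph.cycleGraph n ↪g (bipartitePower T k)) := by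
  constructor
  intro emb
  obtain ⟨m, rfl⟩ : ∃ m, n = m + 2 := ⟨n - 2, by omega⟩
  set N := m + 2 with hN
  haveI : NeZero N := ⟨by omega⟩
  set v : ZMod N → V := fun a => emb a with hv
  have hinj : ∀ {x y : ZMod N}, v x = v y → x = y := by
    intro x y h
    have := emb.injective h
    exact this
  -- adjacency transfer
  have hAdj : ∀ x y : ZMod N, (y - x = 1) →
      Odd (T.dist (v x) (v y)) ∧ T.dist (v x) (v y) ≤ k := by
    intro x y h
    have hcyc : (SimpleGraph.cycleGraph N).Adj x y := by
      change x - y = 1 ∨ y - x = 1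
      right; exact h
    have hpow : (bipartitePower T k).Adj (v x) (v y) := emb.map_rel_iff.mpr hcyc
    rw [bipartitePower, SimpleGraph.fromRel_adj] at hpow
    rcases hpow.2 with h1 | h1
    · exact h1
    · rw [SimpleGraph.dist_comm]; exact h1
  have hNAdj : ∀ x y : ZMod N, x ≠ y → (x - y ≠ 1) → (y - x ≠ 1) →
      Odd (T.dist (v x) (v y)) → k + 1 ≤ T.dist (v x) (v y) := by
    intro x y hne h1 h2 hodd
    have hcyc : ¬ (SimpleGraph.cycleGraph N).Adj x y := by
      change ¬ (x - y = 1 ∨ y - x = 1)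
      push_neg
      exact ⟨h1, h2⟩
    have hpow : ¬ (bipartitePower T k).Adj (v x) (v y) := fun h => hcyc (emb.map_rel_iff.mp h)
    rw [bipartitePower, SimpleGraph.fromRel_adj] at hpow
    push_neg at hpow
    have hd := hpow (fun h => hne (hinj h))
    have := hd.1 hodd
    omega
  -- basic index facts
  have val_cast : ∀ t : ℕ, t < N → ((t : ZMod N)).val = t := fun t ht => ZMod.val_cast_of_lt ht
  have cast_ne_zero : ∀ t : ℕ, 1 ≤ t → t < N → (t : ZMod N) ≠ 0 := by
    intro t h1 h2 he
    have := val_cast t h2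
    rw [he] at this
    simp [ZMod.val_zero] at this
    omega
  haveI : Fact (1 < N) := ⟨by omega⟩
  have cast_ne_one : ∀ t : ℕ, 2 ≤ t → t < N → (t : ZMod N) ≠ 1 := by
    intro t h1 h2 he
    have h3 := val_cast t h2
    rw [he, ZMod.val_one] at h3
    omega
  have cast_ne_neg_one : ∀ t : ℕ, t ≤ N - 2 → (t : ZMod N) ≠ -1 := by
    intro t h1 he
    have h2 : ((t:ZMod N) + 1) = 0 := by rw [he]; ring
    have h3 : (((t+1 : ℕ)):ZMod N) = 0 := by push_cast; exact h2
    exact cast_ne_zero (t+1) (by omega) (by omega) h3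
  -- steps
  have hstep : ∀ a : ZMod N, Odd (T.dist (v a) (v (a + 1))) ∧ T.dist (v a) (v (a + 1)) ≤ k := by
    intro a
    exact hAdj a (a+1) (by ring)
  -- parity chain
  have hparC : ∀ (a : ZMod N) (t : ℕ),
      (T.dist (v a) (v (a + (t : ZMod N))) : ZMod 2) = (t : ZMod 2) := by
    intro a t
    induction t with
    | zero =>
      simp only [Nat.cast_zero, add_zero]
      rw [SimpleGraph.dist_self]
      simp
    | succ t ih =>
      have hidx : a + ((t+1 : ℕ) : ZMod N) = (a + (t : ZMod N)) + 1 := by push_cast; ring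
      rw [hidx]
      have hp := dist_parity hT (v a) (v (a + (t : ZMod N))) (v ((a + (t : ZMod N)) + 1))
      rw [hp, ih]
      have hodd := (hstep (a + (t : ZMod N))).1
      rw [(cast2_one_iff _).mpr hodd]
      push_cast
      ring
  -- N is even
  have hNeven : Even N := by
    have := hparC 0 N
    rw [ZMod.natCast_self, add_zero, SimpleGraph.dist_self] at this
    rw [← cast2_zero_iff]
    exact this.symm
  have hN6 : 6 ≤ N := by
    rw [Nat.even_iff] at hNeven
    omega
  -- parity of pair distances
  have hpair_par : ∀ (a : ZMod N) (t : ℕ), Odd t →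
      Odd (T.dist (v a) (v (a + (t : ZMod N)))) := by
    intro a t ht
    have := hparC a t
    rw [(cast2_one_iff t).mpr ht] at this
    exact (cast2_one_iff _).mp this
  have hpair_par' : ∀ (a : ZMod N) (t : ℕ), Even t →
      Even (T.dist (v a) (v (a + (t : ZMod N)))) := by
    intro a t ht
    have := hparC a t
    rw [(cast2_zero_iff t).mpr ht] at this
    exact (cast2_zero_iff _).mp this
  -- strong bound for odd-index pairs
  have hOddGT : ∀ (a : ZMod N) (t : ℕ), 2 ≤ t → t ≤ N - 2 → Odd t →
      k + 1 ≤ T.dist (v a) (v (a + (t : ZMod N))) := by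
    intro a t h2 hN2 hodd
    refine hNAdj a (a + (t : ZMod N)) ?_ ?_ ?_ (hpair_par a t hodd)
    · intro he
      have : (t : ZMod N) = 0 := by
        have := congrArg (fun z => z - a) he
        simpa using this.symm
      exact cast_ne_zero t (by omega) (by omega) this
    · have : a - (a + (t : ZMod N)) = -(t : ZMod N) := by ring
      rw [this]
      intro he
      have : (t : ZMod N) = -1 := by
        have := congrArg (fun z => -z) he
        simpa using this
      exact cast_ne_neg_one t hN2 this
    · have : (a + (t : ZMod N)) - a = (t : ZMod N) := by ring
      rw [this]
      exact cast_ne_one t h2 (by omega)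
  -- the set of distances of separated pairs
  set S : Set ℕ := {d : ℕ | ∃ (a : ZMod N) (t : ℕ), 2 ≤ t ∧ t ≤ N - 2 ∧
      T.dist (v a) (v (a + (t : ZMod N))) = d} with hS
  have hSne : S.Nonempty := ⟨_, 0, 2, by omega, by omega, rfl⟩
  set D0 : ℕ := sInf S with hD0
  have hD0mem : D0 ∈ S := Nat.sInf_mem hSne
  have hD0min : ∀ d ∈ S, D0 ≤ d := fun d hd => Nat.sInf_le hd
  have hD0pos : 1 ≤ D0 := by
    obtain ⟨a, t, h2, hN2, hdist⟩ := hD0mem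
    rcases Nat.eq_zero_or_pos D0 with h0 | h1
    · exfalso
      rw [h0] at hdist
      have h5 := hinj (dist_zero hT hdist)
      have h3 : (t : ZMod N) = 0 := by
        have h4 := congrArg (fun z => z - a) h5
        simpa using h4.symm
      exact cast_ne_zero t (by omega) (by omega) h3
    · exact h1
  by_cases hcase : k + 1 ≤ D0
  · -- Case A
    refine master hT (E := k+1) (s := 1) hN6 v (fun a => (hstep a).2) ?_ ?_ 0
      (by omega) (by omega) hNeven (Or.inr rfl) rfl ?_ ?_ ?_
    · intro a t h2 hN2
      exact le_trans hcase (hD0min _ ⟨a, t, h2, hN2, rfl⟩)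
    · intro a t h2 hN2 _
      exact le_trans hcase (hD0min _ ⟨a, t, h2, hN2, rfl⟩)
    · -- 1 ≤ dist (v 0) (v (0 + 1))
      rcases Nat.eq_zero_or_pos (T.dist (v 0) (v (0 + ((1:ℕ) : ZMod N)))) with h0 | h1
      · exfalso
        have h5 := hinj (dist_zero hT h0)
        have h3 : ((1:ℕ) : ZMod N) = 0 := by
          have h4 := congrArg (fun z => z - (0 : ZMod N)) h5
          simpa using h4.symm
        exact cast_ne_zero 1 (by omega) (by omega) h3
      · exact h1
    · -- dist ≤ k
      have := (hstep 0).2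
      have hidx : (0 : ZMod N) + ((1:ℕ) : ZMod N) = 0 + 1 := by push_cast; ring
      rw [hidx]
      exact this
    · -- D ≤ E
      have := (hstep 0).2
      have hidx : (0 : ZMod N) + ((1:ℕ) : ZMod N) = 0 + 1 := by push_cast; ring
      rw [hidx]
      omega
  · -- Case B
    push_neg at hcase
    obtain ⟨a, t, ht2, htN, hdist⟩ := hD0mem
    have hD0even : Even D0 := by
      rcases Nat.even_or_odd D0 with he | ho
      · exact he
      · exfalso
        have := hOddGT a t ht2 htN ?_
        · omega
        · -- t odd from dist odd
          have hp := hparC a t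
          rw [hdist, (cast2_one_iff D0).mpr ho] at hp
          rw [Nat.odd_iff]
          rcases Nat.even_or_odd t with he' | ho'
          · exfalso
            rw [(cast2_zero_iff t).mpr he'] at hp
            simp at hp
          · rw [Nat.odd_iff] at ho'; exact ho'
    have hteven : Even t := by
      have hp := hparC a t
      rw [hdist, (cast2_zero_iff D0).mpr hD0even] at hp
      exact (cast2_zero_iff t).mp hp.symm
    have hLB1 : ∀ (b : ZMod N) (u : ℕ), 2 ≤ u → u ≤ N - 2 →
        D0 ≤ T.dist (v b) (v (b + (u : ZMod N))) :=
      fun b u h2 hN2 => hD0min _ ⟨b, u, h2, hN2, rfl⟩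
    have hLB2 : ∀ (sv : ℕ), Even sv → ∀ (b : ZMod N) (u : ℕ), 2 ≤ u → u ≤ N - 2 →
        Odd (u + sv) → k + 1 ≤ T.dist (v b) (v (b + (u : ZMod N))) := by
      intro sv hsv b u h2 hN2 hodd
      refine hOddGT b u h2 hN2 ?_
      rw [Nat.odd_iff] at hodd ⊢
      rw [Nat.even_iff] at hsv
      omega
    by_cases hhalf : t ≤ N / 2
    · -- use (a, t)
      have ht4 : t + 4 ≤ N := by
        rw [Nat.even_iff] at hNeven hteven
        omega
      exact master hT hN6 v (fun b => (hstep b).2) hLB1 (hLB2 t hteven) a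
        (by omega) ht4 hNeven (Or.inl hteven) hdist hD0pos (by omega) le_rfl
    · -- use (a + t, N - t)
      push_neg at hhalf
      have hsub : ((N - t : ℕ) : ZMod N) = -(t : ZMod N) := by
        rw [Nat.cast_sub (by omega : t ≤ N), ZMod.natCast_self]
        ring
      have hidx : (a + (t : ZMod N)) + ((N - t : ℕ) : ZMod N) = a := by
        rw [hsub]; ring
      have hdist' : T.dist (v (a + (t : ZMod N)))
          (v ((a + (t : ZMod N)) + ((N - t : ℕ) : ZMod N))) = D0 := by
        rw [hidx, SimpleGraph.dist_comm]
        exact hdist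
      have hstev : Even (N - t) := by
        rw [Nat.even_iff] at hNeven hteven ⊢
        omega
      have hs4 : (N - t) + 4 ≤ N := by omega
      exact master hT hN6 v (fun b => (hstep b).2) hLB1 (hLB2 (N-t) hstev)
        (a + (t : ZMod N)) (by omega) hs4 hNeven (Or.inl hstev) hdist' hD0pos
        (by omega) le_rfl

theorem bipartition (hT : T.IsTree) (k : ℕ) :
    ∃ A B : Set V, IsBipartitionOf (bipartitePower T k) A B := by
  obtain ⟨r⟩ := hT.isConnected.nonempty
  refine ⟨{x | Even (T.dist r x)}, {x | ¬ Even (T.dist r x)}, ?_, ?_, ?_⟩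
  · rw [Set.disjoint_left]
    intro x hx hx'
    exact hx' hx
  · ext x
    simp only [Set.mem_union, Set.mem_setOf_eq, Set.mem_univ, iff_true]
    exact em _
  · intro u v huv
    rw [bipartitePower, SimpleGraph.fromRel_adj] at huv
    have hodd : Odd (T.dist u v) := by
      rcases huv.2 with h | h
      · exact h.1
      · rw [SimpleGraph.dist_comm]; exact h.1
    have hp := dist_parity hT r u v
    simp only [Set.mem_setOf_eq]
    rw [(cast2_one_iff _).mpr hodd] at hp
    constructor
    · intro he hev
      rw [(cast2_zero_iff _).mpr he, (cast2_zero_iff _).mpr hev] at hp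
      simp at hp
    · intro hne
      rcases Nat.even_or_odd (T.dist r u) with he | ho
      · exact he
      · exfalso
        apply hne
        rw [(cast2_one_iff _).mpr ho] at hp
        rw [← cast2_zero_iff]
        rw [hp]
        decide

end TreePowerAux

theorem stmt2 {V : Type*} (T : SimpleGraph V) (hT : T.IsTree) (k : ℕ) (hk : Odd k)
    (hk0 : 0 < k) :
    ChordalBipartite (bipartitePower T k) := by
  constructor
  · exact TreePowerAux.bipartition hT k
  · intro n hn
    exact TreePowerAux.noCycle hT k hk n hn
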